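/- Let H be a group, d : Fin n → ℕ with d i ≥ 1, and for each i : Fin n let u_i : H →* unitaryGroup (Fin (d i)) ℂ be a group homomorphism that is irreducible (the only invariant subspaces of (Fin (d i) → ℂ) under all u_i h are ⊥ and ⊤). Suppose ψ : (∀ i, Fin (d i)) → ℂ is nonzero and invariant under the tensor product action: for all h ∈ H and all x, ∑_y (∏_i (u_i h) (x i) (y i)) · ψ(y) = ψ(x). Then ψ / ‖ψ‖ (the state obtained by dividing ψ by its ℓ² norm) is locally maximally entangled. -/

import Mathlib

open scoped ComplexConjugate

noncomputable section

def rhoK {n : ℕ} (d : Fin n → ℕ) (ψ : (∀ i, Fin (d i)) → ℂ) (k : Fin n) :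
    Matrix (Fin (d k)) (Fin (d k)) ℂ :=
  Matrix.of fun j l =>
    ∑ x : ∀ i, Fin (d i), if x k = j then ψ x * conj (ψ (Function.update x k l)) else 0

def Normalized {n : ℕ} {d : Fin n → ℕ} (ψ : (∀ i, Fin (d i)) → ℂ) : Prop :=
  ∑ x, ‖ψ x‖ ^ 2 = 1

def IsLME {n : ℕ} (d : Fin n → ℕ) (ψ : (∀ i, Fin (d i)) → ℂ) : Prop :=
  Normalized ψ ∧ ∀ k, rhoK d ψ k = (1 / (d k : ℂ)) • 1

def LMEExists (n : ℕ) (d : Fin n → ℕ) : Prop := ∃ ψ, IsLME d ψ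

def Nfun {n : ℕ} (k : Fin n → ℕ) : ℤ :=
  ∑ S ∈ Finset.univ.powerset.filter (fun S : Finset (Fin n) => S.Nonempty),
    (-1 : ℤ) ^ (S.card + 1) * ((Finset.gcd S k : ℕ) : ℤ)

def Rfun {n : ℕ} (d : Fin n → ℕ) : ℤ :=
  (∏ i, (d i : ℤ)) - Nfun (fun i => (d i) ^ 2)

def Dfun {n : ℕ} (d : Fin n → ℕ) : ℤ :=
  (∏ i, (d i : ℤ)) - 1 - ∑ i, ((d i : ℤ) ^ 2 - 1)

/-- A unitary representation is irreducible if the only invariant subspaces are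
trivial. -/
def IsIrreducibleRep {m : ℕ} {H : Type*} [Group H]
    (u : H →* Matrix.unitaryGroup (Fin m) ℂ) : Prop :=
  ∀ W : Submodule ℂ (Fin m → ℂ),
    (∀ h : H, ∀ w ∈ W, Matrix.mulVec (u h : Matrix (Fin m) (Fin m) ℂ) w ∈ W) →
    W = ⊥ ∨ W = ⊤


lemma schur {m : ℕ} (hm : 1 ≤ m) {H : Type*} [Group H]
    (u : H →* Matrix.unitaryGroup (Fin m) ℂ)
    (hirr : ∀ W : Submodule ℂ (Fin m → ℂ),
      (∀ h : H, ∀ w ∈ W, Matrix.mulVec (u h : Matrix (Fin m) (Fin m) ℂ) w ∈ W) →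
      W = ⊥ ∨ W = ⊤)
    (ρ : Matrix (Fin m) (Fin m) ℂ)
    (hcomm : ∀ h : H, (u h : Matrix (Fin m) (Fin m) ℂ) * ρ = ρ * (u h : Matrix (Fin m) (Fin m) ℂ)) :
    ∃ c : ℂ, ρ = c • 1 := by
  haveI : Nonempty (Fin m) := ⟨⟨0, hm⟩⟩
  haveI : Nontrivial (Fin m → ℂ) := Function.nontrivial
  set f : Module.End ℂ (Fin m → ℂ) := Matrix.mulVecLin ρ with hf
  obtain ⟨c, hc⟩ := Module.End.exists_eigenvalue f
  refine ⟨c, ?_⟩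
  set W := f.eigenspace c with hW
  have hWinv : ∀ h : H, ∀ w ∈ W, Matrix.mulVec (u h : Matrix (Fin m) (Fin m) ℂ) w ∈ W := by
    intro h w hw
    rw [hW, Module.End.mem_eigenspace_iff] at hw ⊢
    have : f (Matrix.mulVec (u h : Matrix (Fin m) (Fin m) ℂ) w)
        = Matrix.mulVec ((u h : Matrix (Fin m) (Fin m) ℂ) * ρ) w := by
      rw [hcomm h]
      simp [hf, Matrix.mulVecLin_apply, Matrix.mulVec_mulVec]
    rw [this, ← Matrix.mulVec_mulVec]
    have hw' : ρ.mulVec w = c • w := hw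
    rw [hw', Matrix.mulVec_smul]
  rcases hirr W hWinv with hbot | htop
  · exact absurd hbot hc
  · have hall : ∀ v : Fin m → ℂ, ρ.mulVec v = c • v := by
      intro v
      have : v ∈ W := htop ▸ Submodule.mem_top
      rw [hW, Module.End.mem_eigenspace_iff] at this
      simpa [hf, Matrix.mulVecLin_apply] using this
    ext i j
    have := congrFun (hall (Pi.single j 1)) i
    simpa [Matrix.mulVec_single, Pi.single_apply, Matrix.one_apply, mul_comm] using this



def splitIn {n : ℕ} (d : Fin n → ℕ) (k : Fin n) (a : Fin (d k))
    (r : ∀ j : {j // j ≠ k}, Fin (d j)) : ∀ i, Fin (d i) :=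
  (Equiv.piSplitAt k fun i => Fin (d i)).symm (a, r)

lemma splitIn_self {n : ℕ} (d : Fin n → ℕ) (k : Fin n) (a : Fin (d k))
    (r : ∀ j : {j // j ≠ k}, Fin (d j)) : splitIn d k a r k = a := by
  simp [splitIn]

lemma splitIn_ne {n : ℕ} (d : Fin n → ℕ) (k : Fin n) (a : Fin (d k))
    (r : ∀ j : {j // j ≠ k}, Fin (d j)) (j : Fin n) (h : j ≠ k) :
    splitIn d k a r j = r ⟨j, h⟩ := by
  simp [splitIn, h]

lemma update_splitIn {n : ℕ} (d : Fin n → ℕ) (k : Fin n) (a l : Fin (d k))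
    (r : ∀ j : {j // j ≠ k}, Fin (d j)) :
    Function.update (splitIn d k a r) k l = splitIn d k l r := by
  funext j
  by_cases h : j = k
  · subst h; simp [splitIn_self]
  · rw [Function.update_of_ne h, splitIn_ne d k a r j h, splitIn_ne d k l r j h]

lemma sum_split {n : ℕ} (d : Fin n → ℕ) (k : Fin n) {M : Type*} [AddCommMonoid M]
    (f : (∀ i, Fin (d i)) → M) :
    ∑ x, f x = ∑ a, ∑ r, f (splitIn d k a r) := by
  rw [← Equiv.sum_comp (Equiv.piSplitAt k fun i => Fin (d i)).symm f, Fintype.sum_prod_type]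
  rfl

lemma rhoK_apply {n : ℕ} (d : Fin n → ℕ) (ψ : (∀ i, Fin (d i)) → ℂ) (k : Fin n)
    (j l : Fin (d k)) :
    (Matrix.of fun j l =>


     ∑ x : ∀ i, Fin (d i), if x k = j then ψ x * conj (ψ (Function.update x k l)) else 0 :
       Matrix (Fin (d k)) (Fin (d k)) ℂ) j l
      = ∑ r, ψ (splitIn d k j r) * conj (ψ (splitIn d k l r)) := by
  show (∑ x : ∀ i, Fin (d i), if x k = j then ψ x * conj (ψ (Function.update x k l)) else 0) = _
  rw [sum_split d k]
  rw [Finset.sum_eq_single j]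
  · exact Finset.sum_congr rfl fun r _ => by
      rw [splitIn_self, if_pos rfl, update_splitIn]
  · intro a _ ha
    apply Finset.sum_eq_zero
    intro r _
    rw [splitIn_self, if_neg ha]
  · intro h; exact absurd (Finset.mem_univ j) h

lemma prod_split {n : ℕ} (k : Fin n) {M : Type*} [CommMonoid M] (f : Fin n → M) :
    ∏ i, f i = f k * ∏ j : {j // j ≠ k}, f j := by
  rw [← Finset.mul_prod_erase Finset.univ f (Finset.mem_univ k)]
  congr 1
  rw [Finset.prod_subtype (p := fun j => j ≠ k) (Finset.univ.erase k)
    (fun x => by simp [Finset.mem_erase]) f]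

lemma orth {ι : Type*} [Fintype ι] [DecidableEq ι] (m : ι → ℕ)
    (M : ∀ i, Matrix (Fin (m i)) (Fin (m i)) ℂ)
    (hM : ∀ i, M i ∈ Matrix.unitaryGroup (Fin (m i)) ℂ)
    (s t : ∀ i, Fin (m i)) :
    ∑ r : ∀ i, Fin (m i), (∏ i, M i (r i) (s i)) * conj (∏ i, M i (r i) (t i))
      = if s = t then 1 else 0 := by
  have hstep : ∀ r : ∀ i, Fin (m i),
      (∏ i, M i (r i) (s i)) * conj (∏ i, M i (r i) (t i))
        = ∏ i, (M i (r i) (s i) * conj (M i (r i) (t i))) := by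
    intro r
    rw [map_prod, ← Finset.prod_mul_distrib]
  simp_rw [hstep]
  rw [← Fintype.piFinset_univ,
    ← Finset.prod_univ_sum (fun _ => (Finset.univ : Finset _))
      (fun i c => M i c (s i) * conj (M i c (t i)))]
  have hcol : ∀ i, (∑ c, M i c (s i) * conj (M i c (t i))) = if s i = t i then 1 else 0 := by
    intro i
    have h1 : star (M i) * M i = 1 := ((Unitary.mem_iff).mp (hM i)).1
    have h2 := congrFun (congrFun h1 (t i)) (s i)
    rw [Matrix.mul_apply] at h2
    simp only [Matrix.star_apply, Matrix.one_apply, Complex.star_def] at h2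
    rw [show (∑ c, M i c (s i) * conj (M i c (t i)))
        = ∑ c, conj (M i c (t i)) * M i c (s i) from
      Finset.sum_congr rfl fun c _ => mul_comm _ _, h2]
    exact if_congr eq_comm rfl rfl
  rw [Finset.prod_congr rfl fun i _ => hcol i]
  by_cases hst : s = t
  · simp [hst]
  · rw [if_neg hst]
    obtain ⟨i, hi⟩ := Function.ne_iff.mp hst
    exact Finset.prod_eq_zero (Finset.mem_univ i) (if_neg hi)


lemma rhoK_apply' {n : ℕ} (d : Fin n → ℕ) (ψ : (∀ i, Fin (d i)) → ℂ) (k : Fin n)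
    (j l : Fin (d k)) :
    rhoK d ψ k j l = ∑ r, ψ (splitIn d k j r) * conj (ψ (splitIn d k l r)) := by
  show (∑ x : ∀ i, Fin (d i), if x k = j then ψ x * conj (ψ (Function.update x k l)) else 0) = _
  rw [sum_split d k]
  rw [Finset.sum_eq_single j]
  · exact Finset.sum_congr rfl fun r _ => by
      rw [splitIn_self, if_pos rfl, update_splitIn]
  · intro a _ ha
    apply Finset.sum_eq_zero
    intro r _
    rw [splitIn_self, if_neg ha]
  · intro h; exact absurd (Finset.mem_univ j) h

lemma rest_splitIn {n : ℕ} (d : Fin n → ℕ) (k : Fin n) (a : Fin (d k))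
    (r : ∀ j : {j // j ≠ k}, Fin (d j)) :
    (fun jj : {j // j ≠ k} => splitIn d k a r jj.1) = r := by
  funext jj
  rw [splitIn_ne d k a r jj.1 jj.2]

lemma rho_conj {n : ℕ} (d : Fin n → ℕ) (k : Fin n) {H : Type*} [Group H]
    (u : ∀ i : Fin n, H →* Matrix.unitaryGroup (Fin (d i)) ℂ)
    (ψ : (∀ i, Fin (d i)) → ℂ)
    (hinv : ∀ h : H, ∀ x : ∀ i, Fin (d i),
      ∑ y : ∀ i, Fin (d i),
        (∏ i, (u i h : Matrix (Fin (d i)) (Fin (d i)) ℂ) (x i) (y i)) * ψ y = ψ x)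
    (h : H) :
    ((u k h : Matrix (Fin (d k)) (Fin (d k)) ℂ)) * rhoK d ψ k
        * star ((u k h : Matrix (Fin (d k)) (Fin (d k)) ℂ)) = rhoK d ψ k := by
  set U : ∀ i, Matrix (Fin (d i)) (Fin (d i)) ℂ := fun i => (u i h : _) with hU
  set rest : (∀ i, Fin (d i)) → (∀ jj : {j // j ≠ k}, Fin (d jj.1)) :=
    fun y jj => y jj.1 with hrest
  set P : (∀ jj : {j // j ≠ k}, Fin (d jj.1)) → (∀ jj : {j // j ≠ k}, Fin (d jj.1)) → ℂ :=
    fun r s => ∏ jj : {j // j ≠ k}, U jj.1 (r jj) (s jj) with hP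
  have hψ' : ∀ (a : Fin (d k)) (r : ∀ jj : {j // j ≠ k}, Fin (d jj.1)),
      ψ (splitIn d k a r) = ∑ y, (U k a (y k) * P r (rest y)) * ψ y := by
    intro a r
    rw [← hinv h (splitIn d k a r)]
    refine Finset.sum_congr rfl fun y _ => ?_
    congr 1
    rw [prod_split k (fun i => U i (splitIn d k a r i) (y i))]
    congr 1
    · rw [splitIn_self]
    · exact Finset.prod_congr rfl fun jj _ => by rw [splitIn_ne d k a r jj.1 jj.2]
  have horth : ∀ s t : ∀ jj : {j // j ≠ k}, Fin (d jj.1),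
      ∑ r, P r s * conj (P r t) = if s = t then 1 else 0 := by
    intro s t
    exact orth (fun jj : {j // j ≠ k} => d jj.1) (fun jj => U jj.1)
      (fun jj => (u jj.1 h).2) s t
  ext j l
  -- Right-hand side (the goal's RHS) as a sum over r:
  rw [rhoK_apply' d ψ k j l]
  -- Left-hand side: expand matrix products
  rw [Matrix.mul_apply]
  simp_rw [Matrix.mul_apply, Matrix.star_apply, Complex.star_def]
  -- LHS = ∑ b, (∑ a, U k j a * ρ a b) * conj (U k l b)
  simp_rw [rhoK_apply' d ψ k]
  -- Now massage LHS into triple sum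
  have hLHS : (∑ b, (∑ a, U k j a * ∑ s, ψ (splitIn d k a s) * conj (ψ (splitIn d k b s)))
        * conj (U k l b))
      = ∑ b, ∑ a, ∑ s, U k j a * ψ (splitIn d k a s)
          * (conj (U k l b) * conj (ψ (splitIn d k b s))) := by
    refine Finset.sum_congr rfl fun b _ => ?_
    rw [Finset.sum_mul]
    refine Finset.sum_congr rfl fun a _ => ?_
    rw [Finset.mul_sum, Finset.sum_mul]
    exact Finset.sum_congr rfl fun s _ => by ring
  rw [hLHS]
  -- Massage RHS into the same triple sum
  have hstep1 : (∑ r, ψ (splitIn d k j r) * conj (ψ (splitIn d k l r)))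
      = ∑ r, ∑ y, ∑ z, ((U k j (y k) * P r (rest y)) * ψ y)
          * conj ((U k l (z k) * P r (rest z)) * ψ z) := by
    refine Finset.sum_congr rfl fun r _ => ?_
    rw [hψ' j r, hψ' l r, map_sum, Finset.sum_mul_sum]
  have hstep2 : (∑ r, ∑ y, ∑ z, ((U k j (y k) * P r (rest y)) * ψ y)
          * conj ((U k l (z k) * P r (rest z)) * ψ z))
      = ∑ y, ∑ z, (if rest y = rest z then 1 else 0)
          * (U k j (y k) * ψ y * (conj (U k l (z k)) * conj (ψ z))) := by
    rw [Finset.sum_comm]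
    refine Finset.sum_congr rfl fun y _ => ?_
    rw [Finset.sum_comm]
    refine Finset.sum_congr rfl fun z _ => ?_
    rw [← horth (rest y) (rest z), Finset.sum_mul]
    refine Finset.sum_congr rfl fun r _ => ?_
    simp only [map_mul]
    ring
  rw [hstep1, hstep2]
  rw [sum_split d k (fun y => ∑ z, (if rest y = rest z then 1 else 0)
    * (U k j (y k) * ψ y * (conj (U k l (z k)) * conj (ψ z))))]
  have hcoll : ∀ (a : Fin (d k)) (s : ∀ jj : {j // j ≠ k}, Fin (d jj.1)),
      (∑ z, (if rest (splitIn d k a s) = rest z then 1 else 0)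
        * (U k j ((splitIn d k a s) k) * ψ (splitIn d k a s)
            * (conj (U k l (z k)) * conj (ψ z))))
      = ∑ b, U k j a * ψ (splitIn d k a s) * (conj (U k l b) * conj (ψ (splitIn d k b s))) := by
    intro a s
    rw [sum_split d k (fun z => (if rest (splitIn d k a s) = rest z then 1 else 0)
      * (U k j ((splitIn d k a s) k) * ψ (splitIn d k a s)
          * (conj (U k l (z k)) * conj (ψ z))))]
    refine Finset.sum_congr rfl fun b _ => ?_
    have : ∀ t : ∀ jj : {j // j ≠ k}, Fin (d jj.1),
        (if rest (splitIn d k a s) = rest (splitIn d k b t) then (1:ℂ) else 0)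
          * (U k j ((splitIn d k a s) k) * ψ (splitIn d k a s)
              * (conj (U k l ((splitIn d k b t) k)) * conj (ψ (splitIn d k b t))))
        = if s = t then U k j a * ψ (splitIn d k a s)
            * (conj (U k l b) * conj (ψ (splitIn d k b t))) else 0 := by
      intro t
      simp only [hrest]
      rw [rest_splitIn, rest_splitIn, splitIn_self, splitIn_self, ite_mul, one_mul, zero_mul]
    simp_rw [this]
    rw [Finset.sum_ite_eq]
    simp
  rw [Finset.sum_congr rfl fun a _ => Finset.sum_congr rfl fun s _ => hcoll a s]
  -- Now both sides are triple sums; match orders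
  rw [Finset.sum_comm]
  refine Finset.sum_congr rfl fun b _ => ?_
  rw [Finset.sum_comm]


lemma rhoK_trace {n : ℕ} (d : Fin n → ℕ) (ψ : (∀ i, Fin (d i)) → ℂ) (k : Fin n) :
    ∑ j, rhoK d ψ k j j = ((∑ x, ‖ψ x‖ ^ 2 : ℝ) : ℂ) := by
  have : ∀ j : Fin (d k), rhoK d ψ k j j
      = ∑ x : ∀ i, Fin (d i), if x k = j then ψ x * conj (ψ (Function.update x k j)) else 0 :=
    fun j => rfl
  simp_rw [this]
  rw [Finset.sum_comm]
  rw [Complex.ofReal_sum]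
  refine Finset.sum_congr rfl fun x _ => ?_
  rw [Finset.sum_ite_eq]
  simp only [Finset.mem_univ, if_true, Function.update_eq_self]
  rw [Complex.mul_conj]
  norm_cast
  rw [Complex.normSq_eq_norm_sq]

lemma rhoK_div {n : ℕ} (d : Fin n → ℕ) (ψ : (∀ i, Fin (d i)) → ℂ) (k : Fin n) (s : ℝ) :
    rhoK d (fun x => ψ x / (s : ℂ)) k = (((s : ℂ) * s)⁻¹) • rhoK d ψ k := by
  ext j l
  show (∑ x : ∀ i, Fin (d i), if x k = j
      then (ψ x / s) * conj ((ψ (Function.update x k l)) / s) else 0)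
    = ((s : ℂ) * s)⁻¹ * ∑ x : ∀ i, Fin (d i), if x k = j
      then ψ x * conj (ψ (Function.update x k l)) else 0
  rw [Finset.mul_sum]
  refine Finset.sum_congr rfl fun x _ => ?_
  split_ifs with hx
  · rw [map_div₀, Complex.conj_ofReal]
    by_cases hs : (s : ℂ) = 0
    · simp [hs]
    · field_simp
  · rw [mul_zero]

theorem invariant_vector_is_lme (n : ℕ) (d : Fin n → ℕ) (hd : ∀ i, 1 ≤ d i)
    (H : Type*) [Group H]
    (u : ∀ i : Fin n, H →* Matrix.unitaryGroup (Fin (d i)) ℂ)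
    (hirr : ∀ i, IsIrreducibleRep (u i))
    (ψ : (∀ i, Fin (d i)) → ℂ) (hne : ψ ≠ 0)
    (hinv : ∀ h : H, ∀ x : ∀ i, Fin (d i),
      ∑ y : ∀ i, Fin (d i),
        (∏ i, (u i h : Matrix (Fin (d i)) (Fin (d i)) ℂ) (x i) (y i)) * ψ y = ψ x) :
    IsLME d (fun x => ψ x / (Real.sqrt (∑ z, ‖ψ z‖ ^ 2) : ℂ)) := by
  set S : ℝ := ∑ z, ‖ψ z‖ ^ 2 with hSdef
  have hSpos : 0 < S := by
    obtain ⟨x, hx⟩ := Function.ne_iff.mp hne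
    refine Finset.sum_pos' (fun z _ => sq_nonneg _) ⟨x, Finset.mem_univ x, ?_⟩
    exact pow_pos (norm_pos_iff.mpr hx) 2
  have hsqrt : ((Real.sqrt S : ℂ)) * (Real.sqrt S : ℂ) = (S : ℂ) := by
    rw [← Complex.ofReal_mul, Real.mul_self_sqrt hSpos.le]
  have hSne : (S : ℂ) ≠ 0 := by
    exact_mod_cast hSpos.ne'
  constructor
  · show ∑ x, ‖ψ x / (Real.sqrt S : ℂ)‖ ^ 2 = 1
    have hterm : ∀ x, ‖ψ x / (Real.sqrt S : ℂ)‖ ^ 2 = ‖ψ x‖ ^ 2 / S := by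
      intro x
      rw [norm_div, div_pow, Complex.norm_real, Real.norm_eq_abs, abs_of_nonneg (Real.sqrt_nonneg S),
        Real.sq_sqrt hSpos.le]
    rw [Finset.sum_congr rfl fun x _ => hterm x, ← Finset.sum_div, ← hSdef,
      div_self hSpos.ne']
  · intro k
    have hdk : (d k : ℂ) ≠ 0 := Nat.cast_ne_zero.mpr (Nat.one_le_iff_ne_zero.mp (hd k))
    have hcomm : ∀ h : H, (u k h : Matrix (Fin (d k)) (Fin (d k)) ℂ) * rhoK d ψ k
        = rhoK d ψ k * (u k h : Matrix (Fin (d k)) (Fin (d k)) ℂ) := by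
      intro h
      have h1 := rho_conj d k u ψ hinv h
      have h2 : star ((u k h : Matrix (Fin (d k)) (Fin (d k)) ℂ))
          * (u k h : Matrix (Fin (d k)) (Fin (d k)) ℂ) = 1 :=
        ((Unitary.mem_iff).mp (u k h).2).1
      calc (u k h : Matrix (Fin (d k)) (Fin (d k)) ℂ) * rhoK d ψ k
          = (u k h : Matrix (Fin (d k)) (Fin (d k)) ℂ) * rhoK d ψ k * 1 := by rw [mul_one]
        _ = (u k h : Matrix (Fin (d k)) (Fin (d k)) ℂ) * rhoK d ψ k
            * (star ((u k h : Matrix (Fin (d k)) (Fin (d k)) ℂ))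
              * (u k h : Matrix (Fin (d k)) (Fin (d k)) ℂ)) := by rw [h2]
        _ = ((u k h : Matrix (Fin (d k)) (Fin (d k)) ℂ) * rhoK d ψ k
            * star ((u k h : Matrix (Fin (d k)) (Fin (d k)) ℂ)))
              * (u k h : Matrix (Fin (d k)) (Fin (d k)) ℂ) := by rw [← mul_assoc]
        _ = rhoK d ψ k * (u k h : Matrix (Fin (d k)) (Fin (d k)) ℂ) := by rw [h1]
    obtain ⟨c, hc⟩ := schur (hd k) (u k) (hirr k) (rhoK d ψ k) hcomm
    have htr : c * (d k : ℂ) = (S : ℂ) := by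
      have t1 := rhoK_trace d ψ k
      rw [hc] at t1
      simp only [Matrix.smul_apply, Matrix.one_apply_eq, smul_eq_mul, mul_one,
        Finset.sum_const, Finset.card_univ, Fintype.card_fin, nsmul_eq_mul] at t1
      rw [← t1]
      ring
    show rhoK d (fun x => ψ x / (Real.sqrt S : ℂ)) k = (1 / (d k : ℂ)) • 1
    rw [rhoK_div d ψ k (Real.sqrt S), hsqrt, hc, smul_smul]
    congr 1
    field_simp
    linear_combination htr
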